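/- If T is a labeled D-tree accepted by a k-weak-pebble hesitant alternating tree automaton A, then A has an accepting homogeneous run on T, i.e., an accepting run r such that whenever two nodes of r carry the same configuration (q,x,ȳ), the multisets of configurations labeling their children coincide. -/

import Mathlib

/-- Trees / run trees: prefix-closed, sibling-downward-closed subsets of ℕ*. -/
def IsTree (T : Set (List ℕ)) : Prop :=
  [] ∈ T ∧ (∀ x : List ℕ, ∀ c : ℕ, x ++ [c] ∈ T → x ∈ T) ∧
    (∀ x : List ℕ, ∀ c c' : ℕ, x ++ [c] ∈ T → c' < c → x ++ [c'] ∈ T)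

/-- The branching degree of a node. -/
noncomputable def deg (T : Set (List ℕ)) (x : List ℕ) : ℕ :=
  {c : ℕ | x ++ [c] ∈ T}.ncard

inductive AClass where
  | existential | universal | transient
deriving DecidableEq

/-- Positive Boolean formulas. -/
inductive PosBool (X : Type) where
  | tt | ff
  | var (x : X)
  | and (a b : PosBool X)
  | or (a b : PosBool X)

def PosBool.Sat {X : Type} (v : X → Prop) : PosBool X → Prop
  | .tt => True
  | .ff => False
  | .var x => v x
  | .and a b => a.Sat v ∧ b.Sat v
  | .or a b => a.Sat v ∨ b.Sat v

def PosBool.vars {X : Type} : PosBool X → List X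
  | .tt => []
  | .ff => []
  | .var x => [x]
  | .and a b => a.vars ++ b.vars
  | .or a b => a.vars ++ b.vars

/-- All `P`-atoms of the formula are only disjunctively related. -/
def DisjOnly {X : Type} (P : X → Prop) : PosBool X → Prop
  | .tt => True
  | .ff => True
  | .var _ => True
  | .and a b => DisjOnly P a ∧ DisjOnly P b ∧
      ((∀ x ∈ a.vars, ¬ P x) ∨ (∀ x ∈ b.vars, ¬ P x))
  | .or a b => DisjOnly P a ∧ DisjOnly P b

/-- All `P`-atoms of the formula are only conjunctively related. -/
def ConjOnly {X : Type} (P : X → Prop) : PosBool X → Prop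
  | .tt => True
  | .ff => True
  | .var _ => True
  | .or a b => ConjOnly P a ∧ ConjOnly P b ∧
      ((∀ x ∈ a.vars, ¬ P x) ∨ (∀ x ∈ b.vars, ¬ P x))
  | .and a b => ConjOnly P a ∧ ConjOnly P b

/-- Moves of a (nonsymmetric) automaton: to the `c`-th child (`c ∈ D`,
0-indexed), to the parent (`-1`), stay (`0`), or the root test. -/
inductive NMove where
  | child (c : ℕ) | up | stay | root
deriving DecidableEq

/-- The possible values of the transition function. -/
inductive ATrans (Q : Type) where
  | drop (q : Q)
  | lift (q : Q)
  | form (φ : PosBool (NMove × Q))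

def ATrans.states {Q : Type} : ATrans Q → List Q
  | .drop q => [q]
  | .lift q => [q]
  | .form φ => φ.vars.map Prod.snd

/-- A `k`-weak-pebble hesitant alternating tree automaton (states `Q`,
alphabet `σ`, arities `D`), with partition `idx` into classes classified by
`cls`, and hesitant acceptance condition `⟨G,B⟩`. -/
structure WPHAA (Q σ : Type) (k : ℕ) where
  q0 : Q
  D : Set ℕ
  δ : Q → σ → ℕ → Bool → ATrans Q
  idx : Q → ℕ
  cls : ℕ → AClass
  G : Set Q
  B : Set Q

/-- Syntactic restrictions of Definition 2.1: no lift when the pebble is not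
here, no move to a child `≥ d`, no move up from the last pebble's position. -/
def WellFormed {Q σ : Type} {k : ℕ} (A : WPHAA Q σ k) : Prop :=
  (∀ q s d p, A.δ q s d false ≠ .lift p) ∧
  (∀ q s d b φ, A.δ q s d b = .form φ →
    ∀ mp ∈ φ.vars, ∀ c : ℕ, mp.1 = NMove.child c → c < d) ∧
  (∀ q s d φ, A.δ q s d true = .form φ → ∀ mp ∈ φ.vars, mp.1 ≠ NMove.up)

/-- The hesitancy conditions on the partition. -/
def Hesitant {Q σ : Type} {k : ℕ} (A : WPHAA Q σ k) : Prop :=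
  (∀ q s d b, ∀ p ∈ (A.δ q s d b).states, A.idx p ≤ A.idx q) ∧
  (∀ q s d b, A.cls (A.idx q) = .transient →
    ∀ p ∈ (A.δ q s d b).states, A.idx p ≠ A.idx q) ∧
  (∀ q s d b φ, A.cls (A.idx q) = .existential → A.δ q s d b = .form φ →
    DisjOnly (fun mp : NMove × Q => A.idx mp.2 = A.idx q) φ) ∧
  (∀ q s d b φ, A.cls (A.idx q) = .universal → A.δ q s d b = .form φ →
    ConjOnly (fun mp : NMove × Q => A.idx mp.2 = A.idx q) φ)

/-- `(T,V)` is a `D`-tree for `A`. -/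
def IsDTree {Q σ : Type} {k : ℕ} (A : WPHAA Q σ k) (T : Set (List ℕ)) : Prop :=
  IsTree T ∧ ∀ x ∈ T, {c : ℕ | x ++ [c] ∈ T}.Finite ∧ deg T x ∈ A.D

/-- A configuration: state, current node, stack of placed pebbles
(the last entry is the last placed pebble; `≤ k` of them). -/
structure Config (Q : Type) where
  st : Q
  pos : List ℕ
  peb : List (List ℕ)
deriving DecidableEq

def HasChild {Q : Type} (R : Set (List ℕ)) (ℓ : List ℕ → Config Q)
    (v : List ℕ) (c : Config Q) : Prop :=
  ∃ j : ℕ, v ++ [j] ∈ R ∧ ℓ (v ++ [j]) = c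

def MoveOK {Q : Type} (T R : Set (List ℕ)) (ℓ : List ℕ → Config Q)
    (v x : List ℕ) (peb : List (List ℕ)) : NMove × Q → Prop
  | (NMove.child c, p) => x ++ [c] ∈ T ∧ HasChild R ℓ v ⟨p, x ++ [c], peb⟩
  | (NMove.up, p) => x ≠ [] ∧ peb.getLast? ≠ some x ∧
      HasChild R ℓ v ⟨p, x.dropLast, peb⟩
  | (NMove.stay, p) => HasChild R ℓ v ⟨p, x, peb⟩
  | (NMove.root, p) => x = [] ∧ HasChild R ℓ v ⟨p, x, peb⟩

/-- The node `v` of the run is compatible with the transition function. -/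
def LocalOK {Q σ : Type} {k : ℕ} (A : WPHAA Q σ k) (T : Set (List ℕ))
    (V : List ℕ → σ) (R : Set (List ℕ)) (ℓ : List ℕ → Config Q)
    (v : List ℕ) : Prop :=
  (ℓ v).pos ∈ T ∧ (ℓ v).peb.length ≤ k ∧
    match A.δ (ℓ v).st (V (ℓ v).pos) (deg T (ℓ v).pos)
        (decide ((ℓ v).peb.getLast? = some (ℓ v).pos)) with
    | .drop p => (ℓ v).peb.length < k ∧
        HasChild R ℓ v ⟨p, (ℓ v).pos, (ℓ v).peb ++ [(ℓ v).pos]⟩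
    | .lift p => (ℓ v).peb.getLast? = some (ℓ v).pos ∧
        HasChild R ℓ v ⟨p, (ℓ v).pos, (ℓ v).peb.dropLast⟩
    | .form φ => ∃ Y : Set (NMove × Q), PosBool.Sat (· ∈ Y) φ ∧
        ∀ mp ∈ Y, MoveOK T R ℓ v (ℓ v).pos (ℓ v).peb mp

/-- A run of `A` on `(T,V)`: a tree `R` labeled by configurations via `ℓ`,
starting at the initial configuration and compatible with `δ`. -/
def IsRun {Q σ : Type} {k : ℕ} (A : WPHAA Q σ k) (T : Set (List ℕ))
    (V : List ℕ → σ) (R : Set (List ℕ)) (ℓ : List ℕ → Config Q) : Prop :=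
  IsTree R ∧ ℓ [] = ⟨A.q0, [], []⟩ ∧ ∀ v ∈ R, LocalOK A T V R ℓ v

def InfBranch (R : Set (List ℕ)) (b : ℕ → List ℕ) : Prop :=
  b 0 = [] ∧ ∀ n, b n ∈ R ∧ ∃ c : ℕ, b (n + 1) = b n ++ [c]

/-- The hesitant acceptance condition on an infinite sequence of states: the
path gets trapped in a class `i`; if `i` is existential it visits `G`
infinitely often, if `i` is universal it visits `B` only finitely often. -/
def AccBranch {Q σ : Type} {k : ℕ} (A : WPHAA Q σ k) (s : ℕ → Q) : Prop :=
  ∃ i N, (∀ n, N ≤ n → A.idx (s n) = i) ∧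
    ((A.cls i = .existential ∧ ∀ m, ∃ n, m ≤ n ∧ s n ∈ A.G) ∨
     (A.cls i = .universal ∧ ∃ m, ∀ n, m ≤ n → s n ∉ A.B))

/-- At `v`, a transition to the Boolean combination `true` applies. -/
def TrueApplies {Q σ : Type} {k : ℕ} (A : WPHAA Q σ k) (T : Set (List ℕ))
    (V : List ℕ → σ) (ℓ : List ℕ → Config Q) (v : List ℕ) : Prop :=
  match A.δ (ℓ v).st (V (ℓ v).pos) (deg T (ℓ v).pos)
      (decide ((ℓ v).peb.getLast? = some (ℓ v).pos)) with
  | .form φ => PosBool.Sat (fun _ => False) φ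
  | _ => False

/-- A run is accepting if every infinite path satisfies the acceptance
condition and every finite path ends where a `true`-transition applies. -/
def Accepting {Q σ : Type} {k : ℕ} (A : WPHAA Q σ k) (T : Set (List ℕ))
    (V : List ℕ → σ) (R : Set (List ℕ)) (ℓ : List ℕ → Config Q) : Prop :=
  (∀ b : ℕ → List ℕ, InfBranch R b → AccBranch A (fun n => (ℓ (b n)).st)) ∧
  (∀ v ∈ R, (∀ j : ℕ, v ++ [j] ∉ R) → TrueApplies A T V ℓ v)

/-- A run is homogeneous if any two run nodes carrying the same configuration
have the same multiset of configurations at their children (expressed by a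
label-preserving bijection between the children). -/
def Homogeneous {Q : Type} (R : Set (List ℕ)) (ℓ : List ℕ → Config Q) : Prop :=
  ∀ u ∈ R, ∀ v ∈ R, ℓ u = ℓ v →
    ∃ e : {c : ℕ // u ++ [c] ∈ R} ≃ {c : ℕ // v ++ [c] ∈ R},
      ∀ c : {c : ℕ // u ++ [c] ∈ R}, ℓ (v ++ [(e c).1]) = ℓ (u ++ [c.1])

/-! ### Auxiliary development for `stmt8` -/

open Classical in
theorem PosBool.sat_congr {X : Type} {v w : X → Prop} :
    ∀ φ : PosBool X, (∀ x ∈ φ.vars, (v x ↔ w x)) → (φ.Sat v ↔ φ.Sat w)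
  | .tt, _ => Iff.rfl
  | .ff, _ => Iff.rfl
  | .var x, h => by simpa [PosBool.Sat] using h x (by simp [PosBool.vars])
  | .and a b, h => by
      simp only [PosBool.Sat]
      exact and_congr (a.sat_congr fun x hx => h x (by simp [PosBool.vars, hx]))
        (b.sat_congr fun x hx => h x (by simp [PosBool.vars, hx]))
  | .or a b, h => by
      simp only [PosBool.Sat]
      exact or_congr (a.sat_congr fun x hx => h x (by simp [PosBool.vars, hx]))
        (b.sat_congr fun x hx => h x (by simp [PosBool.vars, hx]))

theorem PosBool.sat_mono {X : Type} {v w : X → Prop} (h : ∀ x, v x → w x) :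
    ∀ φ : PosBool X, φ.Sat v → φ.Sat w
  | .tt, _ => trivial
  | .ff, hs => hs.elim
  | .var x, hs => h x hs
  | .and a b, hs => ⟨a.sat_mono h hs.1, b.sat_mono h hs.2⟩
  | .or a b, hs => hs.elim (fun hs => Or.inl (a.sat_mono h hs))
      (fun hs => Or.inr (b.sat_mono h hs))

theorem disjOnly_false {X : Type} : ∀ φ : PosBool X, DisjOnly (fun _ => False) φ
  | .tt => trivial
  | .ff => trivial
  | .var _ => trivial
  | .and a b => ⟨disjOnly_false a, disjOnly_false b, Or.inl fun _ _ h => h⟩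
  | .or a b => ⟨disjOnly_false a, disjOnly_false b⟩

/-- Shrinking a satisfying assignment to a list of atoms containing at most one
`P`-atom, when the `P`-atoms are only disjunctively related. -/
theorem sat_shrink {X : Type} (P : X → Prop) :
    ∀ (φ : PosBool X) (v : X → Prop), φ.Sat v → DisjOnly P φ →
      ∃ Y : List X, (∀ x ∈ Y, v x ∧ x ∈ φ.vars) ∧ φ.Sat (· ∈ Y) ∧
        ∀ a ∈ Y, ∀ b ∈ Y, P a → P b → a = b
  | .tt, v, _, _ => ⟨[], by simp, trivial, by simp⟩
  | .ff, v, hs, _ => hs.elim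
  | .var x, v, hs, _ => ⟨[x], by simpa [PosBool.vars, PosBool.Sat] using hs, by simp [PosBool.Sat], by simp⟩
  | .and a b, v, hs, hd => by
      obtain ⟨Ya, hYa, hsa, hua⟩ := sat_shrink P a v hs.1 hd.1
      obtain ⟨Yb, hYb, hsb, hub⟩ := sat_shrink P b v hs.2 hd.2.1
      refine ⟨Ya ++ Yb, ?_, ?_, ?_⟩
      · intro x hx
        rcases List.mem_append.1 hx with hx | hx
        · exact ⟨(hYa x hx).1, by simp [PosBool.vars, (hYa x hx).2]⟩
        · exact ⟨(hYb x hx).1, by simp [PosBool.vars, (hYb x hx).2]⟩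
      · exact ⟨a.sat_mono (fun x hx => List.mem_append.2 (Or.inl hx)) hsa,
          b.sat_mono (fun x hx => List.mem_append.2 (Or.inr hx)) hsb⟩
      · intro x hx y hy hPx hPy
        rcases hd.2.2 with hside | hside
        · have hx' : x ∈ Yb := by
            rcases List.mem_append.1 hx with hx | hx
            · exact absurd hPx (hside x (hYa x hx).2)
            · exact hx
          have hy' : y ∈ Yb := by
            rcases List.mem_append.1 hy with hy | hy
            · exact absurd hPy (hside y (hYa y hy).2)
            · exact hy
          exact hub x hx' y hy' hPx hPy
        · have hx' : x ∈ Ya := by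
            rcases List.mem_append.1 hx with hx | hx
            · exact hx
            · exact absurd hPx (hside x (hYb x hx).2)
          have hy' : y ∈ Ya := by
            rcases List.mem_append.1 hy with hy | hy
            · exact hy
            · exact absurd hPy (hside y (hYb y hy).2)
          exact hua x hx' y hy' hPx hPy
  | .or a b, v, hs, hd => by
      rcases hs with hs | hs
      · obtain ⟨Ya, hYa, hsa, hua⟩ := sat_shrink P a v hs hd.1
        exact ⟨Ya, fun x hx => ⟨(hYa x hx).1, by simp [PosBool.vars, (hYa x hx).2]⟩,
          Or.inl hsa, hua⟩
      · obtain ⟨Yb, hYb, hsb, hub⟩ := sat_shrink P b v hs hd.2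
        exact ⟨Yb, fun x hx => ⟨(hYb x hx).1, by simp [PosBool.vars, (hYb x hx).2]⟩,
          Or.inr hsb, hub⟩

theorem sat_restrict {X : Type} (φ : PosBool X) (v : X → Prop) (h : φ.Sat v) :
    ∃ Y : List X, (∀ x ∈ Y, v x ∧ x ∈ φ.vars) ∧ φ.Sat (· ∈ Y) := by
  obtain ⟨Y, h1, h2, _⟩ := sat_shrink (fun _ => False) φ v h (disjOnly_false φ)
  exact ⟨Y, h1, h2⟩

/-- Prefix-closedness of trees. -/
theorem IsTree.mem_of_prefix {T : Set (List ℕ)} (hT : IsTree T) :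
    ∀ {u : List ℕ}, u ∈ T → ∀ {p : List ℕ}, p <+: u → p ∈ T := by
  intro u
  induction u using List.reverseRecOn with
  | nil => intro hu p hp; rwa [List.prefix_nil.1 hp]
  | append_singleton u c ih =>
      intro hu p hp
      rcases List.prefix_concat_iff.1 hp with rfl | hp
      · exact hu
      · exact ih (hT.2.1 u c hu) hp

/-- Building an infinite chain by dependent choice. -/
theorem exists_chain {α : Type*} {S : α → Prop} {r : α → α → Prop}
    (h : ∀ x, S x → ∃ y, S y ∧ r x y) {x0 : α} (h0 : S x0) :
    ∃ f : ℕ → α, f 0 = x0 ∧ ∀ n, S (f n) ∧ r (f n) (f (n + 1)) := by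
  choose g hg1 hg2 using h
  let F : ℕ → {x : α // S x} := fun n =>
    Nat.rec ⟨x0, h0⟩ (fun _ p => ⟨g p.1 p.2, hg1 p.1 p.2⟩) n
  exact ⟨fun n => (F n).1, rfl, fun n => ⟨(F n).2, hg2 (F n).1 (F n).2⟩⟩

theorem wf_of_no_desc {α : Type*} {r : α → α → Prop}
    (h : ∀ f : ℕ → α, ¬ ∀ n, r (f (n + 1)) (f n)) : WellFounded r := by
  constructor
  intro a
  by_contra ha
  have key : ∀ x : α, ¬ Acc r x → ∃ y, (¬ Acc r y) ∧ r y x := by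
    intro x hx
    by_contra h'
    push_neg at h'
    exact hx ⟨x, fun y hy => by_contra fun hy' => h' y hy' hy⟩
  obtain ⟨f, -, hf⟩ := exists_chain key ha
  exact h f fun n => (hf n).2

/-- An antitone sequence of naturals stabilizes. -/
theorem nat_stabilize (f : ℕ → ℕ) (h : ∀ n, f (n + 1) ≤ f n) :
    ∃ N, ∀ n, N ≤ n → f n = f N := by
  have hanti : ∀ m n, m ≤ n → f n ≤ f m := by
    intro m n hmn
    induction n, hmn using Nat.le_induction with
    | base => exact le_rfl
    | succ n hmn ih => exact (h n).trans ih
  obtain ⟨N, hN⟩ : sInf (Set.range f) ∈ Set.range f :=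
    Nat.sInf_mem (Set.range_nonempty f)
  exact ⟨N, fun n hn => le_antisymm (hN ▸ hanti N n hn) (hN ▸ Nat.sInf_le ⟨n, rfl⟩)⟩

/-- Building an infinite branch of a tree from an increasing chain of nodes. -/
theorem build_branch {R : Set (List ℕ)} (hR : IsTree R) (g : ℕ → List ℕ)
    (hmem : ∀ n, g n ∈ R) (hpre : ∀ n, g n <+: g (n + 1))
    (hlen : ∀ n, (g n).length < (g (n + 1)).length) :
    ∃ b : ℕ → List ℕ, InfBranch R b ∧ (∀ n, (b n).length = n) ∧
      (∀ n, b ((g n).length) = g n) ∧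
      (∀ n, (g 0).length ≤ n → g 0 <+: b n ∧ b n <+: g n) := by
  have hmono : ∀ m n, m ≤ n → g m <+: g n := by
    intro m n hmn
    induction n, hmn using Nat.le_induction with
    | base => exact List.prefix_refl _
    | succ n hmn ih => exact ih.trans (hpre n)
  have hlow : ∀ n, n ≤ (g n).length := by
    intro n
    induction n with
    | zero => exact Nat.zero_le _
    | succ n ih => exact Nat.succ_le_of_lt (lt_of_le_of_lt ih (hlen n))
  refine ⟨fun n => (g n).take n, ⟨rfl, ?_⟩, ?_, ?_, ?_⟩
  · intro n
    constructor
    · exact hR.mem_of_prefix (hmem n) (List.take_prefix _ _)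
    · have hl : n < (g (n + 1)).length := lt_of_le_of_lt (hlow n) (hlen n)
      refine ⟨(g (n + 1))[n], ?_⟩
      show (g (n+1)).take (n+1) = (g n).take n ++ [(g (n + 1))[n]]
      rw [List.take_succ, List.getElem?_eq_getElem hl]
      have : (g (n + 1)).take n = (g n).take n :=
        Eq.symm <| (((hmono n (n + 1)) (Nat.le_succ n)).take n).eq_of_length
          (by simp [Nat.min_eq_left (hlow n),
            Nat.min_eq_left ((hlow n).trans (hmono n (n+1) (Nat.le_succ n)).length_le)])
      rw [this]; rfl
  · intro n; simp [Nat.min_eq_left (hlow n)]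
  · intro n
    have h1 : g n <+: g ((g n).length) := hmono n _ (hlow n)
    have := List.prefix_iff_eq_take.1 h1
    exact this.symm
  · intro n hn
    refine ⟨?_, List.take_prefix _ _⟩
    have h0 : g 0 <+: g n := hmono 0 n (Nat.zero_le n)
    calc g 0 = (g n).take (g 0).length := List.prefix_iff_eq_take.1 h0
      _ <+: (g n).take n := List.take_prefix_take_left hn
section Stmt8Aux

variable {Q σ : Type} {k : ℕ}

/-- The transition applying at a configuration. -/
noncomputable def trC (A : WPHAA Q σ k) (T : Set (List ℕ)) (V : List ℕ → σ) (c : Config Q) : ATrans Q :=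
  A.δ c.st (V c.pos) (deg T c.pos) (decide (c.peb.getLast? = some c.pos))

/-- The configuration reached from `c` by the move-atom `mp`. -/
def succC (c : Config Q) (mp : NMove × Q) : Config Q :=
  match mp.1 with
  | .child j => ⟨mp.2, c.pos ++ [j], c.peb⟩
  | .up => ⟨mp.2, c.pos.dropLast, c.peb⟩
  | .stay => ⟨mp.2, c.pos, c.peb⟩
  | .root => ⟨mp.2, c.pos, c.peb⟩

/-- The configuration-determined part of `MoveOK`. -/
def cMoveOK (T : Set (List ℕ)) (c : Config Q) (mp : NMove × Q) : Prop :=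
  match mp.1 with
  | .child j => c.pos ++ [j] ∈ T
  | .up => c.pos ≠ [] ∧ c.peb.getLast? ≠ some c.pos
  | .stay => True
  | .root => c.pos = []

theorem succC_st (c : Config Q) (mp : NMove × Q) : (succC c mp).st = mp.2 := by
  obtain ⟨m, p⟩ := mp; cases m <;> rfl

theorem moveOK_elim {T R : Set (List ℕ)} {ℓ : List ℕ → Config Q} {v : List ℕ}
    {c : Config Q} {mp : NMove × Q} (h : MoveOK T R ℓ v c.pos c.peb mp) :
    cMoveOK T c mp ∧ HasChild R ℓ v (succC c mp) := by
  obtain ⟨m, p⟩ := mp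
  cases m with
  | child j => exact ⟨h.1, h.2⟩
  | up => exact ⟨⟨h.1, h.2.1⟩, h.2.2⟩
  | stay => exact ⟨trivial, h⟩
  | root => exact ⟨h.1, h.2⟩

theorem moveOK_intro {T R : Set (List ℕ)} {ℓ : List ℕ → Config Q} {v : List ℕ}
    {c : Config Q} {mp : NMove × Q} (h1 : cMoveOK T c mp)
    (h2 : HasChild R ℓ v (succC c mp)) :
    MoveOK T R ℓ v c.pos c.peb mp := by
  obtain ⟨m, p⟩ := mp
  cases m with
  | child j => exact ⟨h1, h2⟩
  | up => exact ⟨h1.1, h1.2, h2⟩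
  | stay => exact h2
  | root => exact ⟨h1, h2⟩

variable (A : WPHAA Q σ k) (T : Set (List ℕ)) (V : List ℕ → σ)
  (R : Set (List ℕ)) (ℓ : List ℕ → Config Q)

/-- The configurations appearing in the run `(R, ℓ)`. -/
def SC : Set (Config Q) := {c | ∃ v, v ∈ R ∧ ℓ v = c}

/-- A valid "decision" at configuration `c`: a list of successor configurations
compatible with the transition function. -/
def Dec (c : Config Q) (l : List (Config Q)) : Prop :=
  c.pos ∈ T ∧ c.peb.length ≤ k ∧ (∀ c' ∈ l, c' ∈ SC R ℓ) ∧
  (∀ c' ∈ l, c'.st ∈ (trC A T V c).states) ∧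
  (∀ p, trC A T V c = .drop p →
    c.peb.length < k ∧ l = [⟨p, c.pos, c.peb ++ [c.pos]⟩]) ∧
  (∀ p, trC A T V c = .lift p →
    c.peb.getLast? = some c.pos ∧ l = [⟨p, c.pos, c.peb.dropLast⟩]) ∧
  (∀ φ, trC A T V c = .form φ → ∃ Y : List (NMove × Q), (∀ mp ∈ Y, mp ∈ φ.vars) ∧
    φ.Sat (· ∈ Y) ∧ (∀ mp ∈ Y, cMoveOK T c mp) ∧ l = Y.map (succC c))

theorem localOK_cases {v : List ℕ} (h : LocalOK A T V R ℓ v) :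
    (ℓ v).pos ∈ T ∧ (ℓ v).peb.length ≤ k ∧
    (∀ p, trC A T V (ℓ v) = .drop p → (ℓ v).peb.length < k ∧
      HasChild R ℓ v ⟨p, (ℓ v).pos, (ℓ v).peb ++ [(ℓ v).pos]⟩) ∧
    (∀ p, trC A T V (ℓ v) = .lift p → (ℓ v).peb.getLast? = some (ℓ v).pos ∧
      HasChild R ℓ v ⟨p, (ℓ v).pos, (ℓ v).peb.dropLast⟩) ∧
    (∀ φ, trC A T V (ℓ v) = .form φ → ∃ Y : Set (NMove × Q), φ.Sat (· ∈ Y) ∧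
      ∀ mp ∈ Y, MoveOK T R ℓ v (ℓ v).pos (ℓ v).peb mp) := by
  obtain ⟨h1, h2, h3⟩ := h
  have h3' : (match trC A T V (ℓ v) with
    | .drop p => (ℓ v).peb.length < k ∧
        HasChild R ℓ v ⟨p, (ℓ v).pos, (ℓ v).peb ++ [(ℓ v).pos]⟩
    | .lift p => (ℓ v).peb.getLast? = some (ℓ v).pos ∧
        HasChild R ℓ v ⟨p, (ℓ v).pos, (ℓ v).peb.dropLast⟩
    | .form φ => ∃ Y : Set (NMove × Q), PosBool.Sat (· ∈ Y) φ ∧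
        ∀ mp ∈ Y, MoveOK T R ℓ v (ℓ v).pos (ℓ v).peb mp) := h3
  refine ⟨h1, h2, ?_, ?_, ?_⟩
  · intro p hp; rw [hp] at h3'; exact h3'
  · intro p hp; rw [hp] at h3'; exact h3'
  · intro φ hφ; rw [hφ] at h3'; exact h3'

theorem localOK_intro {v : List ℕ} (h1 : (ℓ v).pos ∈ T) (h2 : (ℓ v).peb.length ≤ k)
    (hd : ∀ p, trC A T V (ℓ v) = .drop p → (ℓ v).peb.length < k ∧
      HasChild R ℓ v ⟨p, (ℓ v).pos, (ℓ v).peb ++ [(ℓ v).pos]⟩)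
    (hl : ∀ p, trC A T V (ℓ v) = .lift p → (ℓ v).peb.getLast? = some (ℓ v).pos ∧
      HasChild R ℓ v ⟨p, (ℓ v).pos, (ℓ v).peb.dropLast⟩)
    (hf : ∀ φ, trC A T V (ℓ v) = .form φ → ∃ Y : Set (NMove × Q), φ.Sat (· ∈ Y) ∧
      ∀ mp ∈ Y, MoveOK T R ℓ v (ℓ v).pos (ℓ v).peb mp) :
    LocalOK A T V R ℓ v := by
  refine ⟨h1, h2, ?_⟩
  show (match trC A T V (ℓ v) with
    | .drop p => (ℓ v).peb.length < k ∧
        HasChild R ℓ v ⟨p, (ℓ v).pos, (ℓ v).peb ++ [(ℓ v).pos]⟩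
    | .lift p => (ℓ v).peb.getLast? = some (ℓ v).pos ∧
        HasChild R ℓ v ⟨p, (ℓ v).pos, (ℓ v).peb.dropLast⟩
    | .form φ => ∃ Y : Set (NMove × Q), PosBool.Sat (· ∈ Y) φ ∧
        ∀ mp ∈ Y, MoveOK T R ℓ v (ℓ v).pos (ℓ v).peb mp)
  rcases htr : trC A T V (ℓ v) with p | p | φ
  · exact hd p htr
  · exact hl p htr
  · exact hf φ htr

theorem trueApplies_intro {v : List ℕ}
    (hd : ∀ p, trC A T V (ℓ v) ≠ .drop p) (hl : ∀ p, trC A T V (ℓ v) ≠ .lift p)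
    (hf : ∀ φ, trC A T V (ℓ v) = .form φ → φ.Sat fun _ => False) :
    TrueApplies A T V ℓ v := by
  show (match trC A T V (ℓ v) with
    | .form φ => PosBool.Sat (fun _ => False) φ
    | _ => False)
  rcases htr : trC A T V (ℓ v) with p | p | φ
  · exact absurd htr (hd p)
  · exact absurd htr (hl p)
  · exact hf φ htr

theorem dec_states_le (hhes : Hesitant A) {c : Config Q} {l : List (Config Q)}
    (h : Dec A T V R ℓ c l) : ∀ c' ∈ l, A.idx c'.st ≤ A.idx c.st := fun c' hc' =>
  hhes.1 c.st (V c.pos) (deg T c.pos) (decide (c.peb.getLast? = some c.pos)) c'.st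
    (h.2.2.2.1 c' hc')

theorem extract_basic (hRun : IsRun A T V R ℓ) {v : List ℕ} (hv : v ∈ R) :
    ∃ l, Dec A T V R ℓ (ℓ v) l ∧ ∀ c' ∈ l, HasChild R ℓ v c' := by
  obtain ⟨h1, h2, hdrop, hlift, hform⟩ := localOK_cases A T V R ℓ (hRun.2.2 v hv)
  rcases htr : trC A T V (ℓ v) with p | p | φ
  · obtain ⟨hk, hch⟩ := hdrop p htr
    refine ⟨[⟨p, (ℓ v).pos, (ℓ v).peb ++ [(ℓ v).pos]⟩], ⟨h1, h2, ?_, ?_, ?_, ?_, ?_⟩, ?_⟩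
    · intro c' hc'; simp only [List.mem_singleton] at hc'; subst hc'
      obtain ⟨j, hj, hlab⟩ := hch; exact ⟨v ++ [j], hj, hlab⟩
    · intro c' hc'; simp only [List.mem_singleton] at hc'; subst hc'
      rw [htr]; simp [ATrans.states]
    · intro p' hp'; rw [htr] at hp'; injection hp' with hpp; subst hpp; exact ⟨hk, rfl⟩
    · intro p' hp'; rw [htr] at hp'; exact absurd hp' (by simp)
    · intro φ hφ; rw [htr] at hφ; exact absurd hφ (by simp)
    · intro c' hc'; simp only [List.mem_singleton] at hc'; subst hc'; exact hch
  · obtain ⟨hk, hch⟩ := hlift p htr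
    refine ⟨[⟨p, (ℓ v).pos, (ℓ v).peb.dropLast⟩], ⟨h1, h2, ?_, ?_, ?_, ?_, ?_⟩, ?_⟩
    · intro c' hc'; simp only [List.mem_singleton] at hc'; subst hc'
      obtain ⟨j, hj, hlab⟩ := hch; exact ⟨v ++ [j], hj, hlab⟩
    · intro c' hc'; simp only [List.mem_singleton] at hc'; subst hc'
      rw [htr]; simp [ATrans.states]
    · intro p' hp'; rw [htr] at hp'; exact absurd hp' (by simp)
    · intro p' hp'; rw [htr] at hp'; injection hp' with hpp; subst hpp; exact ⟨hk, rfl⟩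
    · intro φ hφ; rw [htr] at hφ; exact absurd hφ (by simp)
    · intro c' hc'; simp only [List.mem_singleton] at hc'; subst hc'; exact hch
  · obtain ⟨Y, hsat, hmove⟩ := hform φ htr
    obtain ⟨Yl, hYl, hsatl⟩ := sat_restrict φ (· ∈ Y) hsat
    have hmv : ∀ mp ∈ Yl, cMoveOK T (ℓ v) mp ∧ HasChild R ℓ v (succC (ℓ v) mp) :=
      fun mp hmp => moveOK_elim (hmove mp (hYl mp hmp).1)
    refine ⟨Yl.map (succC (ℓ v)), ⟨h1, h2, ?_, ?_, ?_, ?_, ?_⟩, ?_⟩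
    · intro c' hc'
      obtain ⟨mp, hmp, rfl⟩ := List.mem_map.1 hc'
      obtain ⟨j, hj, hlab⟩ := (hmv mp hmp).2; exact ⟨v ++ [j], hj, hlab⟩
    · intro c' hc'
      obtain ⟨mp, hmp, rfl⟩ := List.mem_map.1 hc'
      rw [htr]; simp only [ATrans.states, succC_st]
      exact List.mem_map.2 ⟨mp, (hYl mp hmp).2, rfl⟩
    · intro p' hp'; rw [htr] at hp'; exact absurd hp' (by simp)
    · intro p' hp'; rw [htr] at hp'; exact absurd hp' (by simp)
    · intro φ' hφ'; rw [htr] at hφ'; injection hφ' with hpp; subst hpp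
      exact ⟨Yl, fun mp hmp => (hYl mp hmp).2, hsatl, fun mp hmp => (hmv mp hmp).1, rfl⟩
    · intro c' hc'
      obtain ⟨mp, hmp, rfl⟩ := List.mem_map.1 hc'
      exact (hmv mp hmp).2

theorem extract_shrunk (hRun : IsRun A T V R ℓ) (hhes : Hesitant A) {v : List ℕ}
    (hv : v ∈ R) (hcls : A.cls (A.idx (ℓ v).st) = .existential) :
    ∃ l, Dec A T V R ℓ (ℓ v) l ∧ (∀ c' ∈ l, HasChild R ℓ v c') ∧
      ∀ c₁ ∈ l, ∀ c₂ ∈ l, A.idx c₁.st = A.idx (ℓ v).st →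
        A.idx c₂.st = A.idx (ℓ v).st → c₁ = c₂ := by
  obtain ⟨h1, h2, hdrop, hlift, hform⟩ := localOK_cases A T V R ℓ (hRun.2.2 v hv)
  rcases htr : trC A T V (ℓ v) with p | p | φ
  · obtain ⟨hk, hch⟩ := hdrop p htr
    refine ⟨[⟨p, (ℓ v).pos, (ℓ v).peb ++ [(ℓ v).pos]⟩], ⟨h1, h2, ?_, ?_, ?_, ?_, ?_⟩, ?_, ?_⟩
    · intro c' hc'; simp only [List.mem_singleton] at hc'; subst hc'
      obtain ⟨j, hj, hlab⟩ := hch; exact ⟨v ++ [j], hj, hlab⟩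
    · intro c' hc'; simp only [List.mem_singleton] at hc'; subst hc'
      rw [htr]; simp [ATrans.states]
    · intro p' hp'; rw [htr] at hp'; injection hp' with hpp; subst hpp; exact ⟨hk, rfl⟩
    · intro p' hp'; rw [htr] at hp'; exact absurd hp' (by simp)
    · intro φ hφ; rw [htr] at hφ; exact absurd hφ (by simp)
    · intro c' hc'; simp only [List.mem_singleton] at hc'; subst hc'; exact hch
    · intro c₁ h₁ c₂ h₂ _ _
      simp only [List.mem_singleton] at h₁ h₂; rw [h₁, h₂]
  · obtain ⟨hk, hch⟩ := hlift p htr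
    refine ⟨[⟨p, (ℓ v).pos, (ℓ v).peb.dropLast⟩], ⟨h1, h2, ?_, ?_, ?_, ?_, ?_⟩, ?_, ?_⟩
    · intro c' hc'; simp only [List.mem_singleton] at hc'; subst hc'
      obtain ⟨j, hj, hlab⟩ := hch; exact ⟨v ++ [j], hj, hlab⟩
    · intro c' hc'; simp only [List.mem_singleton] at hc'; subst hc'
      rw [htr]; simp [ATrans.states]
    · intro p' hp'; rw [htr] at hp'; exact absurd hp' (by simp)
    · intro p' hp'; rw [htr] at hp'; injection hp' with hpp; subst hpp; exact ⟨hk, rfl⟩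
    · intro φ hφ; rw [htr] at hφ; exact absurd hφ (by simp)
    · intro c' hc'; simp only [List.mem_singleton] at hc'; subst hc'; exact hch
    · intro c₁ h₁ c₂ h₂ _ _
      simp only [List.mem_singleton] at h₁ h₂; rw [h₁, h₂]
  · obtain ⟨Y, hsat, hmove⟩ := hform φ htr
    have hdisj : DisjOnly (fun mp : NMove × Q => A.idx mp.2 = A.idx (ℓ v).st) φ :=
      hhes.2.2.1 (ℓ v).st (V (ℓ v).pos) (deg T (ℓ v).pos)
        (decide ((ℓ v).peb.getLast? = some (ℓ v).pos)) φ hcls htr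
    obtain ⟨Yl, hYl, hsatl, huniq⟩ :=
      sat_shrink (fun mp : NMove × Q => A.idx mp.2 = A.idx (ℓ v).st) φ (· ∈ Y) hsat hdisj
    have hmv : ∀ mp ∈ Yl, cMoveOK T (ℓ v) mp ∧ HasChild R ℓ v (succC (ℓ v) mp) :=
      fun mp hmp => moveOK_elim (hmove mp (hYl mp hmp).1)
    refine ⟨Yl.map (succC (ℓ v)), ⟨h1, h2, ?_, ?_, ?_, ?_, ?_⟩, ?_, ?_⟩
    · intro c' hc'
      obtain ⟨mp, hmp, rfl⟩ := List.mem_map.1 hc'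
      obtain ⟨j, hj, hlab⟩ := (hmv mp hmp).2; exact ⟨v ++ [j], hj, hlab⟩
    · intro c' hc'
      obtain ⟨mp, hmp, rfl⟩ := List.mem_map.1 hc'
      rw [htr]; simp only [ATrans.states, succC_st]
      exact List.mem_map.2 ⟨mp, (hYl mp hmp).2, rfl⟩
    · intro p' hp'; rw [htr] at hp'; exact absurd hp' (by simp)
    · intro p' hp'; rw [htr] at hp'; exact absurd hp' (by simp)
    · intro φ' hφ'; rw [htr] at hφ'; injection hφ' with hpp; subst hpp
      exact ⟨Yl, fun mp hmp => (hYl mp hmp).2, hsatl, fun mp hmp => (hmv mp hmp).1, rfl⟩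
    · intro c' hc'
      obtain ⟨mp, hmp, rfl⟩ := List.mem_map.1 hc'
      exact (hmv mp hmp).2
    · intro c₁ h₁ c₂ h₂ hi₁ hi₂
      obtain ⟨mp₁, hmp₁, rfl⟩ := List.mem_map.1 h₁
      obtain ⟨mp₂, hmp₂, rfl⟩ := List.mem_map.1 h₂
      rw [succC_st] at hi₁ hi₂
      rw [huniq mp₁ hmp₁ mp₂ hmp₂ hi₁ hi₂]


/-! #### Existential classes: a distance to goal / discharge -/

def EBase (v : List ℕ) : Prop :=
  (ℓ v).st ∈ A.G ∨ ∃ l, Dec A T V R ℓ (ℓ v) l ∧ ∀ c' ∈ l, A.idx c'.st ≠ A.idx (ℓ v).st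

def EStepN (v u : List ℕ) : Prop :=
  u ∈ R ∧ (∃ j : ℕ, u = v ++ [j]) ∧ A.idx (ℓ u).st = A.idx (ℓ v).st ∧
    ∃ l, Dec A T V R ℓ (ℓ v) l ∧ ℓ u ∈ l ∧
      ∀ c' ∈ l, A.idx c'.st = A.idx (ℓ v).st → c' = ℓ u

def EGood : ℕ → List ℕ → Prop
  | 0, v => EBase A T V R ℓ v
  | n + 1, v => EBase A T V R ℓ v ∨ ∃ u, EStepN A T V R ℓ v u ∧ EGood n u

theorem EGood_zero {v : List ℕ} : EGood A T V R ℓ 0 v ↔ EBase A T V R ℓ v := Iff.rfl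

theorem EGood_succ {n : ℕ} {v : List ℕ} : EGood A T V R ℓ (n + 1) v ↔
    (EBase A T V R ℓ v ∨ ∃ u, EStepN A T V R ℓ v u ∧ EGood A T V R ℓ n u) := Iff.rfl

noncomputable def dE (c : Config Q) : ℕ :=
  sInf {n | ∃ v, v ∈ R ∧ ℓ v = c ∧ EGood A T V R ℓ n v}

theorem exists_EGood (hRun : IsRun A T V R ℓ) (hAcc : Accepting A T V R ℓ)
    (hhes : Hesitant A) {v0 : List ℕ} (hv0 : v0 ∈ R)
    (hcls : A.cls (A.idx (ℓ v0).st) = .existential) :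
    ∃ n, EGood A T V R ℓ n v0 := by
  by_contra hno
  push_neg at hno
  have key : ∀ v : List ℕ,
      (v ∈ R ∧ A.idx (ℓ v).st = A.idx (ℓ v0).st ∧ ∀ n, ¬ EGood A T V R ℓ n v) →
      ∃ u, (u ∈ R ∧ A.idx (ℓ u).st = A.idx (ℓ v0).st ∧ ∀ n, ¬ EGood A T V R ℓ n u) ∧
        ∃ j : ℕ, u = v ++ [j] := by
    rintro v ⟨hvR, hvi, hvB⟩
    obtain ⟨l, hDec, hch, huniq⟩ :=
      extract_shrunk A T V R ℓ hRun hhes hvR (by rw [hvi]; exact hcls)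
    by_cases hdis : ∀ c' ∈ l, A.idx c'.st ≠ A.idx (ℓ v).st
    · exact absurd ((EGood_zero A T V R ℓ).2 (Or.inr ⟨l, hDec, hdis⟩)) (hvB 0)
    · push_neg at hdis
      obtain ⟨c', hc'l, hc'i⟩ := hdis
      obtain ⟨j, hjR, hjlab⟩ := hch c' hc'l
      have hstep : EStepN A T V R ℓ v (v ++ [j]) :=
        ⟨hjR, ⟨j, rfl⟩, by rw [hjlab, hc'i], l, hDec, by rw [hjlab]; exact hc'l,
          fun c'' hc'' hi'' => by
            rw [hjlab]; exact huniq c'' hc'' c' hc'l hi'' hc'i⟩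
      refine ⟨v ++ [j], ⟨hjR, by rw [hjlab, hc'i, hvi], fun n hn => ?_⟩, j, rfl⟩
      exact hvB (n + 1) ((EGood_succ A T V R ℓ).2 (Or.inr ⟨v ++ [j], hstep, hn⟩))
  obtain ⟨f, hf0, hf⟩ := exists_chain key ⟨hv0, rfl, hno⟩
  have hfS := fun n => (hf n).1
  have hstep := fun n => (hf n).2
  obtain ⟨b, hbr, hblen, hbg, -⟩ := build_branch hRun.1 f (fun n => (hfS n).1)
    (fun n => by obtain ⟨j, hj⟩ := hstep n; rw [hj]; exact List.prefix_append _ _)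
    (fun n => by obtain ⟨j, hj⟩ := hstep n; simp [hj])
  have hlenf : ∀ n, (f n).length = (f 0).length + n := by
    intro n
    induction n with
    | zero => rfl
    | succ n ih => obtain ⟨j, hj⟩ := hstep n; simp [hj, ih]; omega
  have hbf : ∀ n, b ((f 0).length + n) = f n := fun n => by
    rw [← hlenf n]; exact hbg n
  obtain ⟨i', N, hconst, hdisj⟩ := hAcc.1 b hbr
  have hi' : i' = A.idx (ℓ (f 0)).st := by
    have h1 : A.idx (ℓ (b ((f 0).length + N))).st = i' :=
      hconst ((f 0).length + N) (Nat.le_add_left N _)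
    rw [hbf N] at h1
    rw [← h1, (hfS N).2.1, hf0]
  rcases hdisj with ⟨-, hGio⟩ | ⟨huni, -⟩
  · obtain ⟨n, hn, hG⟩ := hGio ((f 0).length)
    have hG' : (ℓ (b n)).st ∈ A.G := hG
    have hb : b n = f (n - (f 0).length) := by
      have := hbf (n - (f 0).length)
      rwa [Nat.add_sub_cancel' hn] at this
    rw [hb] at hG'
    have hG := hG'
    exact (hfS (n - (f 0).length)).2.2 0 ((EGood_zero A T V R ℓ).2 (Or.inl hG))
  · rw [hi', (hfS 0).2.1, hcls] at huni
    exact AClass.noConfusion huni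

theorem decide_exist (hRun : IsRun A T V R ℓ) (hAcc : Accepting A T V R ℓ)
    (hhes : Hesitant A) {c : Config Q} (hc : c ∈ SC R ℓ)
    (hcls : A.cls (A.idx c.st) = .existential) :
    ∃ l, Dec A T V R ℓ c l ∧ (c.st ∉ A.G →
      ∀ c' ∈ l, A.idx c'.st = A.idx c.st → dE A T V R ℓ c' < dE A T V R ℓ c) := by
  by_cases hG : c.st ∈ A.G
  · obtain ⟨v, hvR, rfl⟩ := hc
    obtain ⟨l, hDec, -⟩ := extract_basic A T V R ℓ hRun hvR
    exact ⟨l, hDec, fun h => absurd hG h⟩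
  · have hne : {n | ∃ v, v ∈ R ∧ ℓ v = c ∧ EGood A T V R ℓ n v}.Nonempty := by
      obtain ⟨v, hvR, rfl⟩ := hc
      obtain ⟨n, hn⟩ := exists_EGood A T V R ℓ hRun hAcc hhes hvR hcls
      exact ⟨n, v, hvR, rfl, hn⟩
    obtain ⟨v, hvR, hvc, hvE⟩ := Nat.sInf_mem hne
    have hEB : EBase A T V R ℓ v →
        ∃ l, Dec A T V R ℓ c l ∧ (c.st ∉ A.G →
          ∀ c' ∈ l, A.idx c'.st = A.idx c.st → dE A T V R ℓ c' < dE A T V R ℓ c) := by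
      rintro (hGv | ⟨l, hDec, hdis⟩)
      · exact absurd (hvc ▸ hGv) hG
      · refine ⟨l, by rwa [hvc] at hDec, fun _ c' hc' hi => ?_⟩
        exact absurd (by rw [hvc]; exact hi) (hdis c' hc')
    by_cases h0 : dE A T V R ℓ c = 0
    · have h0' : sInf {n | ∃ v, v ∈ R ∧ ℓ v = c ∧ EGood A T V R ℓ n v} = 0 := h0
      rw [h0'] at hvE
      exact hEB ((EGood_zero A T V R ℓ).1 hvE)
    · obtain ⟨m, hm⟩ := Nat.exists_eq_succ_of_ne_zero h0
      have hm' : sInf {n | ∃ v, v ∈ R ∧ ℓ v = c ∧ EGood A T V R ℓ n v} = m + 1 := hm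
      rw [hm'] at hvE
      rcases (EGood_succ A T V R ℓ).1 hvE with hB | ⟨u, hstepN, hEGu⟩
      · exact hEB hB
      · obtain ⟨huR, -, -, l, hDec, hmem, huniq⟩ := hstepN
        refine ⟨l, by rwa [hvc] at hDec, fun _ c' hc' hi => ?_⟩
        have hcu : c' = ℓ u := huniq c' hc' (by rw [hvc]; exact hi)
        subst hcu
        have hle : dE A T V R ℓ (ℓ u) ≤ m := Nat.sInf_le ⟨u, huR, rfl, hEGu⟩
        rw [hm]
        omega

/-! #### Universal classes: ordinal ranks -/

def DescI (v u : List ℕ) : Prop :=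
  v.length < u.length ∧ v <+: u ∧
    ∀ p, v <+: p → p <+: u → p ∈ R ∧ A.idx (ℓ p).st = A.idx (ℓ v).st

theorem descI_mem {v u : List ℕ} (h : DescI A R ℓ v u) :
    v ∈ R ∧ u ∈ R ∧ A.idx (ℓ u).st = A.idx (ℓ v).st :=
  ⟨(h.2.2 v (List.prefix_refl v) h.2.1).1, (h.2.2 u h.2.1 (List.prefix_refl u)).1,
    (h.2.2 u h.2.1 (List.prefix_refl u)).2⟩

theorem descI_step {v u : List ℕ} {j : ℕ} (hv : v ∈ R) (hu : u ∈ R) (hj : u = v ++ [j])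
    (hidx : A.idx (ℓ u).st = A.idx (ℓ v).st) : DescI A R ℓ v u := by
  subst hj
  refine ⟨by simp, List.prefix_append _ _, ?_⟩
  intro p hvp hpu
  have h1 : v.length ≤ p.length := hvp.length_le
  have h2 : p.length ≤ v.length + 1 := by simpa using hpu.length_le
  rcases Nat.lt_or_ge p.length (v.length + 1) with hlt | hge
  · have hvpeq : v = p := hvp.eq_of_length (Nat.le_antisymm h1 (Nat.lt_succ_iff.1 hlt))
    subst hvpeq
    exact ⟨hv, rfl⟩
  · have : p = v ++ [j] := hpu.eq_of_length (by simp; omega)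
    subst this
    exact ⟨hu, hidx⟩

theorem descI_trans {v u w : List ℕ} (h1 : DescI A R ℓ v u) (h2 : DescI A R ℓ u w) :
    DescI A R ℓ v w := by
  refine ⟨h1.1.trans h2.1, h1.2.1.trans h2.2.1, ?_⟩
  intro p hvp hpw
  rcases List.prefix_or_prefix_of_prefix hpw h2.2.1 with hpu | hup
  · exact h1.2.2 p hvp hpu
  · obtain ⟨hpR, hpidx⟩ := h2.2.2 p hup hpw
    exact ⟨hpR, hpidx.trans (descI_mem A R ℓ h1).2.2⟩

def PrecU (u v : List ℕ) : Prop :=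
  A.cls (A.idx (ℓ v).st) = .universal ∧ DescI A R ℓ v u ∧ (ℓ u).st ∈ A.B

theorem precU_wf (hRun : IsRun A T V R ℓ) (hAcc : Accepting A T V R ℓ) :
    WellFounded (PrecU A R ℓ) := by
  apply wf_of_no_desc
  intro f hf
  have hdesc : ∀ n, DescI A R ℓ (f n) (f (n + 1)) := fun n => (hf n).2.1
  have hmem : ∀ n, f n ∈ R := fun n => (descI_mem A R ℓ (hdesc n)).1
  obtain ⟨b, hbr, hblen, hbg, hbmid⟩ := build_branch hRun.1 f hmem
    (fun n => (hdesc n).2.1) (fun n => (hdesc n).1)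
  have htrans : ∀ n, 0 < n → DescI A R ℓ (f 0) (f n) := by
    intro n hn
    induction n with
    | zero => exact absurd hn (lt_irrefl 0)
    | succ n ih =>
        rcases Nat.eq_zero_or_pos n with rfl | hpos
        · exact hdesc 0
        · exact descI_trans A R ℓ (ih hpos) (hdesc n)
  have hbidx : ∀ n, (f 0).length ≤ n →
      A.idx (ℓ (b n)).st = A.idx (ℓ (f 0)).st := by
    intro n hn
    obtain ⟨h0b, hbn⟩ := hbmid n hn
    rcases Nat.eq_or_lt_of_le hn with heq | hlt
    · have hb0 : b n = f 0 := (h0b.eq_of_length (by rw [hblen n, ← heq])).symm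
      rw [hb0]
    · have hnpos : 0 < n := lt_of_le_of_lt (Nat.zero_le _) hlt
      exact ((htrans n hnpos).2.2 (b n) h0b hbn).2
  obtain ⟨i', N, hconst, hdisj⟩ := hAcc.1 b hbr
  have hi' : i' = A.idx (ℓ (f 0)).st := by
    have h1 : A.idx (ℓ (b ((f 0).length + N))).st = i' :=
      hconst ((f 0).length + N) (Nat.le_add_left N _)
    rw [hbidx ((f 0).length + N) (Nat.le_add_right _ _)] at h1
    exact h1.symm
  rcases hdisj with ⟨hex, -⟩ | ⟨-, m, hnB⟩
  · rw [hi', (hf 0).1] at hex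
    exact AClass.noConfusion hex
  · have hBM : (ℓ (f (m + 1))).st ∈ A.B := (hf m).2.2
    have hlow : ∀ n, n ≤ (f n).length := by
      intro n
      induction n with
      | zero => exact Nat.zero_le _
      | succ n ih => have := (hdesc n).1; omega
    have hmb : (ℓ (b ((f (m + 1)).length))).st ∉ A.B :=
      hnB ((f (m + 1)).length) (le_trans (Nat.le_succ m) (hlow (m + 1)))
    rw [hbg (m + 1)] at hmb
    exact hmb hBM

noncomputable def rkU (hwf : WellFounded (PrecU A R ℓ)) (v : List ℕ) : Ordinal :=
  (hwf.apply v).rank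

theorem rkU_lt {hwf : WellFounded (PrecU A R ℓ)} {u v : List ℕ} (h : PrecU A R ℓ u v) :
    rkU A R ℓ hwf u < rkU A R ℓ hwf v := by
  have h1 := Acc.rank_lt_of_rel (hwf.apply v) h
  rwa [Subsingleton.elim ((hwf.apply v).inv h) (hwf.apply u)] at h1

theorem rkU_mono {hwf : WellFounded (PrecU A R ℓ)} {u v : List ℕ}
    (h : ∀ w, PrecU A R ℓ w u → PrecU A R ℓ w v) :
    rkU A R ℓ hwf u ≤ rkU A R ℓ hwf v := by
  rw [show rkU A R ℓ hwf u = (hwf.apply u).rank from rfl, Acc.rank_eq]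
  apply Ordinal.iSup_le
  rintro ⟨w, hw⟩
  rw [Subsingleton.elim ((hwf.apply u).inv hw) (hwf.apply w)]
  exact Order.succ_le_of_lt (rkU_lt A R ℓ (h w hw))

/-- The minimal rank of a run node carrying configuration `c`. -/
noncomputable def rmU (hwf : WellFounded (PrecU A R ℓ)) (c : Config Q) : Ordinal :=
  sInf (rkU A R ℓ hwf '' {v | v ∈ R ∧ ℓ v = c})

theorem decide_univ (hRun : IsRun A T V R ℓ) {hwf : WellFounded (PrecU A R ℓ)}
    {c : Config Q} (hc : c ∈ SC R ℓ) (hcls : A.cls (A.idx c.st) = .universal) :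
    ∃ l, Dec A T V R ℓ c l ∧ ∀ c' ∈ l, A.idx c'.st = A.idx c.st →
      rmU A R ℓ hwf c' ≤ rmU A R ℓ hwf c ∧
        (c'.st ∈ A.B → rmU A R ℓ hwf c' < rmU A R ℓ hwf c) := by
  have hne : (rkU A R ℓ hwf '' {v | v ∈ R ∧ ℓ v = c}).Nonempty := by
    obtain ⟨v, hvR, hvc⟩ := hc
    exact ⟨rkU A R ℓ hwf v, v, ⟨hvR, hvc⟩, rfl⟩
  obtain ⟨v, ⟨hvR, hvc⟩, hvrk⟩ := csInf_mem hne
  obtain ⟨l, hDec, hch⟩ := extract_basic A T V R ℓ hRun hvR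
  rw [hvc] at hDec
  refine ⟨l, hDec, fun c' hc' hi => ?_⟩
  obtain ⟨j, hjR, hjlab⟩ := hch c' hc'
  have hidx : A.idx (ℓ (v ++ [j])).st = A.idx (ℓ v).st := by
    rw [hjlab, hvc, hi]
  have hstep : DescI A R ℓ v (v ++ [j]) := descI_step A R ℓ hvR hjR rfl hidx
  have hclsv : A.cls (A.idx (ℓ v).st) = .universal := by rw [hvc]; exact hcls
  have hle : rkU A R ℓ hwf (v ++ [j]) ≤ rkU A R ℓ hwf v := by
    apply rkU_mono
    rintro w ⟨hwcls, hwdesc, hwB⟩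
    exact ⟨hclsv, descI_trans A R ℓ hstep hwdesc, hwB⟩
  have hmemc' : rmU A R ℓ hwf c' ≤ rkU A R ℓ hwf (v ++ [j]) :=
    csInf_le' ⟨v ++ [j], ⟨hjR, hjlab⟩, rfl⟩
  constructor
  · calc rmU A R ℓ hwf c' ≤ rkU A R ℓ hwf (v ++ [j]) := hmemc'
      _ ≤ rkU A R ℓ hwf v := hle
      _ = rmU A R ℓ hwf c := hvrk
  · intro hB
    have hprec : PrecU A R ℓ (v ++ [j]) v :=
      ⟨hclsv, hstep, by rw [hjlab]; exact hB⟩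
    calc rmU A R ℓ hwf c' ≤ rkU A R ℓ hwf (v ++ [j]) := hmemc'
      _ < rkU A R ℓ hwf v := rkU_lt A R ℓ hprec
      _ = rmU A R ℓ hwf c := hvrk

/-! #### The homogeneous run determined by a decision function -/

def labL (L : Config Q → List (Config Q)) (w : List ℕ) : Config Q :=
  w.foldl (fun c j => (L c).getD j c) ⟨A.q0, [], []⟩

def RTL (L : Config Q → List (Config Q)) : Set (List ℕ) :=
  {w | ∀ p j, p ++ [j] <+: w → j < (L (labL A L p)).length}

theorem labL_snoc (L : Config Q → List (Config Q)) (w : List ℕ) (j : ℕ) :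
    labL A L (w ++ [j]) = (L (labL A L w)).getD j (labL A L w) := by
  simp [labL, List.foldl_append]

theorem RTL_tree (L : Config Q → List (Config Q)) : IsTree (RTL A L) := by
  refine ⟨?_, ?_, ?_⟩
  · intro p j h
    exact absurd (List.prefix_nil.1 h) (by simp)
  · intro x c hx p j hp
    exact hx p j (hp.trans (List.prefix_append _ _))
  · intro x c c' hx hcc p j hp
    rcases List.prefix_concat_iff.1 hp with heq | hp'
    · obtain ⟨h1, h2⟩ := List.append_inj' heq rfl
      injection h2 with h2 _
      subst h1; subst h2
      exact lt_trans hcc (hx _ c (List.prefix_refl _))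
    · exact hx p j (hp'.trans (List.prefix_append _ _))

theorem RTL_child_iff (L : Config Q → List (Config Q)) {w : List ℕ}
    (hw : w ∈ RTL A L) (j : ℕ) :
    w ++ [j] ∈ RTL A L ↔ j < (L (labL A L w)).length := by
  constructor
  · intro h
    exact h w j (List.prefix_refl _)
  · intro hj p j' hp
    rcases List.prefix_concat_iff.1 hp with heq | hp'
    · obtain ⟨h1, h2⟩ := List.append_inj' heq rfl
      injection h2 with h2 _
      subst h1; subst h2; exact hj
    · exact hw p j' hp'

theorem labL_child (L : Config Q → List (Config Q)) {w : List ℕ} {j : ℕ}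
    (hj : j < (L (labL A L w)).length) :
    labL A L (w ++ [j]) = (L (labL A L w))[j] := by
  rw [labL_snoc]
  exact List.getD_eq_getElem _ _ hj

theorem labL_mem_SC (L : Config Q → List (Config Q))
    (h0 : (⟨A.q0, [], []⟩ : Config Q) ∈ SC R ℓ)
    (hcl : ∀ c ∈ SC R ℓ, ∀ c' ∈ L c, c' ∈ SC R ℓ) :
    ∀ w ∈ RTL A L, labL A L w ∈ SC R ℓ := by
  intro w
  induction w using List.reverseRecOn with
  | nil => intro _; exact h0
  | append_singleton w j ih =>
      intro hwj
      have hw : w ∈ RTL A L := (RTL_tree A L).2.1 w j hwj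
      have hj : j < (L (labL A L w)).length := (RTL_child_iff A L hw j).1 hwj
      rw [labL_child A L hj]
      exact hcl _ (ih hw) _ (List.getElem_mem hj)

theorem isRun_new (L : Config Q → List (Config Q)) (hRun : IsRun A T V R ℓ)
    (hDec : ∀ c ∈ SC R ℓ, Dec A T V R ℓ c (L c)) :
    IsRun A T V (RTL A L) (labL A L) := by
  have h0 : (⟨A.q0, [], []⟩ : Config Q) ∈ SC R ℓ := ⟨[], hRun.1.1, hRun.2.1⟩
  have hcl : ∀ c ∈ SC R ℓ, ∀ c' ∈ L c, c' ∈ SC R ℓ := fun c hc =>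
    (hDec c hc).2.2.1
  have hSC := labL_mem_SC A R ℓ L h0 hcl
  refine ⟨RTL_tree A L, rfl, ?_⟩
  intro w hw
  obtain ⟨hpos, hpeb, hS, hst, hdr, hlf, hfm⟩ := hDec _ (hSC w hw)
  apply localOK_intro A T V (RTL A L) (labL A L) hpos hpeb
  · intro p htr
    obtain ⟨hk, hl⟩ := hdr p htr
    have h0' : 0 < (L (labL A L w)).length := by rw [hl]; simp
    refine ⟨hk, 0, (RTL_child_iff A L hw 0).2 h0', ?_⟩
    rw [labL_child A L h0']
    simp [hl]
  · intro p htr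
    obtain ⟨hk, hl⟩ := hlf p htr
    have h0' : 0 < (L (labL A L w)).length := by rw [hl]; simp
    refine ⟨hk, 0, (RTL_child_iff A L hw 0).2 h0', ?_⟩
    rw [labL_child A L h0']
    simp [hl]
  · intro φ htr
    obtain ⟨Yl, hYv, hsat, hcm, hleq⟩ := hfm φ htr
    refine ⟨{mp | mp ∈ Yl}, hsat, ?_⟩
    intro mp hmp
    apply moveOK_intro (c := labL A L w) (hcm mp hmp)
    have hmem : succC (labL A L w) mp ∈ L (labL A L w) := by
      rw [hleq]
      exact List.mem_map_of_mem hmp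
    obtain ⟨j, hjlt, hjeq⟩ := List.mem_iff_getElem.1 hmem
    exact ⟨j, (RTL_child_iff A L hw j).2 hjlt, by rw [labL_child A L hjlt, hjeq]⟩

theorem homog_new (L : Config Q → List (Config Q)) :
    Homogeneous (RTL A L) (labL A L) := by
  intro u hu v hv huv
  refine ⟨Equiv.subtypeEquiv (Equiv.refl ℕ) (fun j => ?_), fun cc => ?_⟩
  · simp only [Equiv.refl_apply]
    rw [RTL_child_iff A L hu j, RTL_child_iff A L hv j, huv]
  · obtain ⟨j, hj⟩ := cc
    have hjl : j < (L (labL A L u)).length := (RTL_child_iff A L hu j).1 hj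
    have hjv : j < (L (labL A L v)).length := huv ▸ hjl
    show labL A L (v ++ [j]) = labL A L (u ++ [j])
    rw [labL_child A L hjv, labL_child A L hjl]
    simp only [huv]

end Stmt8Aux

/-- if a labeled `D`-tree `(T,V)` is accepted by a k-weak-pebble
hesitant alternating tree automaton `A`, then `A` has an accepting
homogeneous run on `(T,V)`. -/
theorem stmt8 {Q σ : Type} {k : ℕ} (A : WPHAA Q σ k)
    (hwf : WellFormed A) (hhes : Hesitant A)
    (T : Set (List ℕ)) (V : List ℕ → σ) (hT : IsDTree A T)
    (hacc : ∃ R ℓ, IsRun A T V R ℓ ∧ Accepting A T V R ℓ) :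
    ∃ R ℓ, IsRun A T V R ℓ ∧ Accepting A T V R ℓ ∧ Homogeneous R ℓ := by
  classical
  obtain ⟨R, ℓ, hRun, hAcc⟩ := hacc
  have hwfU : WellFounded (PrecU A R ℓ) := precU_wf A T V R ℓ hRun hAcc
  -- choose a decision function
  have hdec : ∀ c : Config Q, ∃ l : List (Config Q), c ∈ SC R ℓ →
      Dec A T V R ℓ c l ∧
      (A.cls (A.idx c.st) = .existential → c.st ∉ A.G →
        ∀ c' ∈ l, A.idx c'.st = A.idx c.st → dE A T V R ℓ c' < dE A T V R ℓ c) ∧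
      (A.cls (A.idx c.st) = .universal → ∀ c' ∈ l, A.idx c'.st = A.idx c.st →
        rmU A R ℓ hwfU c' ≤ rmU A R ℓ hwfU c ∧
          (c'.st ∈ A.B → rmU A R ℓ hwfU c' < rmU A R ℓ hwfU c)) := by
    intro c
    by_cases hc : c ∈ SC R ℓ
    · cases hcase : A.cls (A.idx c.st) with
      | existential =>
          obtain ⟨l, h1, h2⟩ := decide_exist A T V R ℓ hRun hAcc hhes hc hcase
          exact ⟨l, fun _ => ⟨h1, fun _ => h2, fun hu => AClass.noConfusion hu⟩⟩
      | universal =>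
          obtain ⟨l, h1, h2⟩ := decide_univ A T V R ℓ hRun (hwf := hwfU) hc hcase
          exact ⟨l, fun _ => ⟨h1, fun he => AClass.noConfusion he, fun _ => h2⟩⟩
      | transient =>
          obtain ⟨v, hvR, rfl⟩ := hc
          obtain ⟨l, h1, -⟩ := extract_basic A T V R ℓ hRun hvR
          exact ⟨l, fun _ => ⟨h1, fun he => AClass.noConfusion he,
            fun hu => AClass.noConfusion hu⟩⟩
    · exact ⟨[], fun h => absurd h hc⟩
  choose L hL using hdec
  have hSC0 : (⟨A.q0, [], []⟩ : Config Q) ∈ SC R ℓ := ⟨[], hRun.1.1, hRun.2.1⟩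
  have hDecL : ∀ c ∈ SC R ℓ, Dec A T V R ℓ c (L c) := fun c hc => (hL c hc).1
  have hSCmem : ∀ w ∈ RTL A L, labL A L w ∈ SC R ℓ :=
    labL_mem_SC A R ℓ L hSC0 (fun c hc => (hDecL c hc).2.2.1)
  refine ⟨RTL A L, labL A L, isRun_new A T V R ℓ L hRun hDecL, ⟨?_, ?_⟩,
    homog_new A L⟩
  · -- infinite branches are accepting
    intro b hbr
    have hbR : ∀ n, b n ∈ RTL A L := fun n => (hbr.2 n).1
    have hmemL : ∀ n, labL A L (b (n + 1)) ∈ L (labL A L (b n)) := by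
      intro n
      obtain ⟨j, hj⟩ := (hbr.2 n).2
      have hjR : b n ++ [j] ∈ RTL A L := hj ▸ hbR (n + 1)
      have hjlt : j < (L (labL A L (b n))).length :=
        (RTL_child_iff A L (hbR n) j).1 hjR
      rw [hj, labL_child A L hjlt]
      exact List.getElem_mem hjlt
    have hSCγ : ∀ n, labL A L (b n) ∈ SC R ℓ := fun n => hSCmem _ (hbR n)
    have hidxle : ∀ n, A.idx (labL A L (b (n + 1))).st ≤ A.idx (labL A L (b n)).st :=
      fun n => dec_states_le A T V R ℓ hhes (hDecL _ (hSCγ n)) _ (hmemL n)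
    obtain ⟨N, hNc⟩ := nat_stabilize (fun n => A.idx (labL A L (b n)).st) hidxle
    have hNconst : ∀ n, N ≤ n →
        A.idx (labL A L (b n)).st = A.idx (labL A L (b N)).st := fun n hn => hNc n hn
    refine ⟨A.idx (labL A L (b N)).st, N, fun n hn => hNconst n hn, ?_⟩
    cases hcase : A.cls (A.idx (labL A L (b N)).st) with
    | transient =>
        exfalso
        have hmem := (hDecL _ (hSCγ N)).2.2.2.1 _ (hmemL N)
        have h2 := hhes.2.1 (labL A L (b N)).st (V (labL A L (b N)).pos)
          (deg T (labL A L (b N)).pos)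
          (decide ((labL A L (b N)).peb.getLast? = some (labL A L (b N)).pos))
          hcase (labL A L (b (N + 1))).st hmem
        exact h2 (hNconst (N + 1) (Nat.le_succ N))
    | existential =>
        left
        refine ⟨rfl, ?_⟩
        have claim : ∀ d m, N ≤ m → dE A T V R ℓ (labL A L (b m)) = d →
            ∃ n, m ≤ n ∧ (labL A L (b n)).st ∈ A.G := by
          intro d
          induction d using Nat.strong_induction_on with
          | _ d ih =>
            intro m hm hd
            by_cases hG : (labL A L (b m)).st ∈ A.G
            · exact ⟨m, le_rfl, hG⟩
            · have hE := (hL _ (hSCγ m)).2.1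
                (by rw [hNconst m hm]; exact hcase) hG
              have hlt : dE A T V R ℓ (labL A L (b (m + 1))) <
                  dE A T V R ℓ (labL A L (b m)) :=
                hE _ (hmemL m)
                  ((hNconst (m + 1) (hm.trans (Nat.le_succ m))).trans
                    (hNconst m hm).symm)
              obtain ⟨n, hn, hG'⟩ := ih (dE A T V R ℓ (labL A L (b (m + 1))))
                (hd ▸ hlt) (m + 1) (hm.trans (Nat.le_succ m)) rfl
              exact ⟨n, (Nat.le_succ m).trans hn, hG'⟩
        intro m
        obtain ⟨n, hn, hG⟩ := claim _ (max m N) (le_max_right m N) rfl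
        exact ⟨n, (le_max_left m N).trans hn, hG⟩
    | universal =>
        right
        refine ⟨rfl, ?_⟩
        by_contra hB
        push_neg at hB
        have hU : ∀ n, N ≤ n →
            rmU A R ℓ hwfU (labL A L (b (n + 1))) ≤ rmU A R ℓ hwfU (labL A L (b n)) ∧
            ((labL A L (b (n + 1))).st ∈ A.B →
              rmU A R ℓ hwfU (labL A L (b (n + 1))) < rmU A R ℓ hwfU (labL A L (b n))) :=
          fun n hn => (hL _ (hSCγ n)).2.2 (by rw [hNconst n hn]; exact hcase)
            _ (hmemL n)
            ((hNconst (n + 1) (hn.trans (Nat.le_succ n))).trans (hNconst n hn).symm)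
        have hanti : ∀ m n, N ≤ m → m ≤ n →
            rmU A R ℓ hwfU (labL A L (b n)) ≤ rmU A R ℓ hwfU (labL A L (b m)) := by
          intro m n hNm hmn
          induction n, hmn using Nat.le_induction with
          | base => exact le_rfl
          | succ n hmn ih => exact ((hU n (hNm.trans hmn)).1).trans ih
        obtain ⟨o, hoS, hmin⟩ := (wellFounded_lt (α := Ordinal)).has_min
          (Set.range fun t => rmU A R ℓ hwfU (labL A L (b (N + t)))) ⟨_, ⟨0, rfl⟩⟩
        obtain ⟨t0, ho⟩ := hoS
        obtain ⟨n1, hn1, hBn1⟩ := hB (N + t0 + 1)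
        have hBn1' : (labL A L (b n1)).st ∈ A.B := hBn1
        have hp : N ≤ n1 - 1 := by omega
        have hlt : rmU A R ℓ hwfU (labL A L (b n1)) <
            rmU A R ℓ hwfU (labL A L (b (n1 - 1))) := by
          have h2 := (hU (n1 - 1) hp).2
          have hne : n1 - 1 + 1 = n1 := by omega
          rw [hne] at h2
          exact h2 hBn1'
        have hle : rmU A R ℓ hwfU (labL A L (b (n1 - 1))) ≤
            rmU A R ℓ hwfU (labL A L (b (N + t0))) :=
          hanti (N + t0) (n1 - 1) (Nat.le_add_right _ _) (by omega)
        have hlto : rmU A R ℓ hwfU (labL A L (b n1)) < o :=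
          lt_of_lt_of_le hlt (hle.trans (le_of_eq ho))
        refine hmin _ ⟨n1 - N, ?_⟩ hlto
        show rmU A R ℓ hwfU (labL A L (b (N + (n1 - N)))) = _
        rw [Nat.add_sub_cancel' (show N ≤ n1 by omega)]
  · -- finite paths end with a `true`-transition
    intro w hw hnoch
    have hc := hSCmem w hw
    have hlen0 : L (labL A L w) = [] := by
      rcases hL0 : L (labL A L w) with _ | ⟨c', l'⟩
      · rfl
      · exfalso
        apply hnoch 0
        apply (RTL_child_iff A L hw 0).2
        rw [hL0]
        simp
    obtain ⟨hpos, hpeb, hS, hst, hdr, hlf, hfm⟩ := hDecL _ hc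
    apply trueApplies_intro A T V (labL A L)
    · intro p hp
      have := (hdr p hp).2
      rw [hlen0] at this
      exact absurd this (by simp)
    · intro p hp
      have := (hlf p hp).2
      rw [hlen0] at this
      exact absurd this (by simp)
    · intro φ hφ
      obtain ⟨Yl, hYv, hsat, hcm, hleq⟩ := hfm φ hφ
      rw [hlen0] at hleq
      have hYnil : Yl = [] := List.map_eq_nil_iff.1 hleq.symm
      subst hYnil
      exact (PosBool.sat_congr φ (by simp)).1 hsat
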